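/- There exists a constant K > 0, depending only on n ≥ 1, with the following property: if D is a nonempty open subset of ℂⁿ, r > 0, and c : D(r) → ℂⁿ is a holomorphic mapping with sup_{z∈D(r)} ‖c(z)‖ ≤ K·r, then the map 𝒞 : D → ℂⁿ, z ↦ z + c(z), is injective. -/

import Mathlib

open Set Metric

/-- The open `r`-neighborhood of a set `M ⊆ ℂⁿ`. -/
def nbhd {n : ℕ} (M : Set (EuclideanSpace ℂ (Fin n))) (r : ℝ) :
    Set (EuclideanSpace ℂ (Fin n)) :=
  {z | ∃ x ∈ M, ‖x - z‖ < r}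

/-- There is a constant `K > 0` depending only on `n` such that any holomorphic
perturbation of the identity by `c` with `‖c‖ ≤ K·r` on the `r`-neighborhood of `D`
is injective on `D`. -/
theorem injective_perturbation (n : ℕ) (hn : 1 ≤ n) :
    ∃ K : ℝ, 0 < K ∧
      ∀ (D : Set (EuclideanSpace ℂ (Fin n))) (r : ℝ)
        (c : EuclideanSpace ℂ (Fin n) → EuclideanSpace ℂ (Fin n)),
        D.Nonempty → IsOpen D → 0 < r →
        DifferentiableOn ℂ c (nbhd D r) →
        (∀ z ∈ nbhd D r, ‖c z‖ ≤ K * r) →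
        Set.InjOn (fun z => z + c z) D := by
  refine ⟨1/8, by norm_num, ?_⟩
  intro D r c _ _ hr hdiff hbound a ha b hb heq
  by_contra hab
  simp only at heq
  -- a + c a = b + c b, so b - a = c a - c b
  have hba : b - a = c a - c b := by
    rw [sub_eq_sub_iff_add_eq_add, ← heq, add_comm]
  set d : ℝ := ‖b - a‖ with hd
  have hd0 : 0 < d := by
    rw [hd, norm_pos_iff, sub_ne_zero]
    exact fun h => hab h.symm
  have haN : a ∈ nbhd D r := ⟨a, ha, by simpa using hr⟩
  have hbN : b ∈ nbhd D r := ⟨b, hb, by simpa using hr⟩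
  have hdle : d ≤ r / 4 := by
    have h1 := hbound a haN
    have h2 := hbound b hbN
    calc d = ‖c a - c b‖ := by rw [hd, hba]
    _ ≤ ‖c a‖ + ‖c b‖ := norm_sub_le _ _
    _ ≤ r / 4 := by linarith
  set u : EuclideanSpace ℂ (Fin n) := ((d : ℂ))⁻¹ • (b - a) with hu
  have hnu : ‖u‖ = 1 := by
    rw [hu, norm_smul, norm_inv, Complex.norm_real, Real.norm_eq_abs,
      abs_of_pos hd0, ← hd, inv_mul_cancel₀ hd0.ne']
  set g : ℂ → EuclideanSpace ℂ (Fin n) := fun t => c (a + t • u) with hg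
  have hmem : ∀ t ∈ ball (0:ℂ) (r/2), a + t • u ∈ nbhd D r := by
    intro t ht
    refine ⟨a, ha, ?_⟩
    have : ‖a - (a + t • u)‖ = ‖t‖ * ‖u‖ := by
      rw [← norm_neg]; simp [norm_smul]
    rw [this, hnu, mul_one]
    simp only [mem_ball, dist_zero_right] at ht
    linarith
  have hdg : DifferentiableOn ℂ g (ball (0:ℂ) (r/2)) := by
    apply DifferentiableOn.comp hdiff
    · exact ((differentiable_id.smul_const u).const_add a).differentiableOn
    · intro t ht; exact hmem t ht
  have hg0 : g 0 = c a := by simp [hg]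
  have h_maps : MapsTo g (ball (0:ℂ) (r/2)) (ball (g 0) (3/8 * r)) := by
    intro t ht
    rw [mem_ball, dist_eq_norm, hg0]
    have h1 := hbound _ (hmem t ht)
    have h2 := hbound a haN
    calc ‖g t - c a‖ ≤ ‖g t‖ + ‖c a‖ := norm_sub_le _ _
    _ ≤ 1/8 * r + 1/8 * r := add_le_add h1 h2
    _ < 3/8 * r := by linarith
  have hT : (d : ℂ) ∈ ball (0:ℂ) (r/2) := by
    rw [mem_ball, dist_zero_right, Complex.norm_real, Real.norm_eq_abs, abs_of_pos hd0]
    linarith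
  have harg : a + (d:ℂ) • u = b := by
    rw [hu, smul_inv_smul₀ (by exact_mod_cast hd0.ne' : (d:ℂ) ≠ 0)]
    abel
  have hgd : g (d : ℂ) = c b := by
    show c (a + (d:ℂ) • u) = c b
    rw [harg]
  have key := Complex.dist_le_div_mul_dist_of_mapsTo_ball hdg (h_maps.mono_right ball_subset_closedBall) hT
  rw [hgd, hg0, dist_eq_norm, dist_zero_right, Complex.norm_real, Real.norm_eq_abs,
    abs_of_pos hd0] at key
  have hcb : ‖c b - c a‖ = d := by
    rw [show c b - c a = -(b - a) by rw [hba]; abel, norm_neg]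
  rw [hcb] at key
  have : (3/8 * r) / (r/2) = 3/4 := by field_simp; ring
  rw [this] at key
  linarith
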